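/- Let q : V → ℝ, R : V × V → ℝ, and θ : V × V → ℝ. Suppose for every t ∈ V the invariant π_s(t) = α·q(t) + Σ_{(u,v)∈V×V} R(u,v)·π_v(t) holds, and suppose 0 ≤ R(u,v) ≤ θ(u,v) for every pair (u,v) ∈ V × V. Then Σ_{t∈V} |π_s(t) − α·q(t)| ≤ Σ_{(u,v)∈V×V} θ(u,v); that is, the vector α·q approximates π_s within ℓ1-error Σ_{(u,v)} θ(u,v). -/

import Mathlib

open Finset

/-- Weighted degree of a node. -/
noncomputable def deg {V : Type*} [Fintype V] (A : V → V → ℝ) (u : V) : ℝ := ∑ v, A u v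

/-- Transition matrix `P t v = A t v / d v` (column-stochastic). -/
noncomputable def transP {V : Type*} [Fintype V] (A : V → V → ℝ) : Matrix V V ℝ :=
  Matrix.of fun t v => A t v / deg A v

/-- Single-source personalized PageRank: `π_x = Σ_{ℓ≥0} α(1-α)^ℓ P^ℓ e_x`. -/
noncomputable def ppr {V : Type*} [Fintype V] [DecidableEq V]
    (A : V → V → ℝ) (α : ℝ) (x t : V) : ℝ :=
  ∑' ℓ : ℕ, α * (1 - α) ^ ℓ * ((transP A ^ ℓ).mulVec (Pi.single x 1)) t

section
variable {V : Type*} [Fintype V] [DecidableEq V]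

lemma pow_entry_nonneg (A : V → V → ℝ) (hnonneg : ∀ u v, 0 ≤ A u v)
    (hdeg : ∀ u, 0 < deg A u) (ℓ : ℕ) (t x : V) : 0 ≤ (transP A ^ ℓ) t x := by
  induction ℓ generalizing t x with
  | zero => simp [Matrix.one_apply]; positivity
  | succ n ih =>
    rw [pow_succ, Matrix.mul_apply]
    exact Finset.sum_nonneg fun k _ => mul_nonneg (ih t k)
      (div_nonneg (hnonneg k x) (hdeg x).le)

lemma pow_colsum (A : V → V → ℝ) (hsymm : ∀ u v, A u v = A v u)
    (hdeg : ∀ u, 0 < deg A u) (ℓ : ℕ) (x : V) : ∑ t, (transP A ^ ℓ) t x = 1 := by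
  induction ℓ generalizing x with
  | zero => simp [Matrix.one_apply]
  | succ n ih =>
    have hcol : ∀ v, ∑ t, transP A t v = 1 := by
      intro v
      simp only [transP, Matrix.of_apply]
      rw [← Finset.sum_div]
      rw [show (∑ t, A t v) = deg A v from by
        simp only [deg]; exact Finset.sum_congr rfl fun t _ => hsymm t v]
      exact div_self (hdeg v).ne'
    rw [pow_succ]
    simp only [Matrix.mul_apply]
    rw [Finset.sum_comm]
    calc ∑ k, ∑ t, (transP A ^ n) t k * transP A k x
        = ∑ k, (∑ t, (transP A ^ n) t k) * transP A k x := by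
          simp [Finset.sum_mul]
      _ = ∑ k, transP A k x := by simp [ih]
      _ = 1 := hcol x
end


section
variable {V : Type*} [Fintype V] [DecidableEq V]

lemma mulVec_single_eq (M : Matrix V V ℝ) (x t : V) :
    M.mulVec (Pi.single x 1) t = M t x := by
  simp [Matrix.mulVec, dotProduct, Pi.single_apply]

lemma ppr_term_nonneg (A : V → V → ℝ) (hnonneg : ∀ u v, 0 ≤ A u v)
    (hdeg : ∀ u, 0 < deg A u) {α : ℝ} (hα : α ∈ Set.Ioo (0:ℝ) 1) (x t : V) (ℓ : ℕ) :
    0 ≤ α * (1 - α) ^ ℓ * ((transP A ^ ℓ).mulVec (Pi.single x 1)) t := by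
  rw [mulVec_single_eq]
  have := pow_entry_nonneg A hnonneg hdeg ℓ t x
  have h1 : (0:ℝ) ≤ 1 - α := by linarith [hα.2]
  exact mul_nonneg (mul_nonneg hα.1.le (pow_nonneg h1 ℓ)) this

set_option maxHeartbeats 1000000 in
lemma ppr_summable (A : V → V → ℝ) (hsymm : ∀ u v, A u v = A v u)
    (hnonneg : ∀ u v, 0 ≤ A u v)
    (hdeg : ∀ u, 0 < deg A u) {α : ℝ} (hα : α ∈ Set.Ioo (0:ℝ) 1) (x t : V) :
    Summable fun ℓ : ℕ => α * (1 - α) ^ ℓ * ((transP A ^ ℓ).mulVec (Pi.single x 1)) t := by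
  have hbound : ∀ ℓ : ℕ, α * (1 - α) ^ ℓ * ((transP A ^ ℓ).mulVec (Pi.single x 1)) t
      ≤ α * (1 - α) ^ ℓ := by
    intro ℓ
    rw [mulVec_single_eq]
    have hle : (transP A ^ ℓ) t x ≤ 1 := by
      rw [← pow_colsum A hsymm hdeg ℓ x]
      exact Finset.single_le_sum (fun i _ => pow_entry_nonneg A hnonneg hdeg ℓ i x)
        (Finset.mem_univ t)
    have h1 : (0:ℝ) ≤ 1 - α := by linarith [hα.2]
    exact mul_le_of_le_one_right (mul_nonneg hα.1.le (pow_nonneg h1 ℓ)) hle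
  exact Summable.of_nonneg_of_le (ppr_term_nonneg A hnonneg hdeg hα x t) hbound
    ((summable_geometric_of_lt_one (by linarith [hα.2]) (by linarith [hα.1])).mul_left α)

lemma ppr_nonneg (A : V → V → ℝ) (hsymm : ∀ u v, A u v = A v u)
    (hnonneg : ∀ u v, 0 ≤ A u v)
    (hdeg : ∀ u, 0 < deg A u) {α : ℝ} (hα : α ∈ Set.Ioo (0:ℝ) 1) (x t : V) :
    0 ≤ ppr A α x t :=
  tsum_nonneg (ppr_term_nonneg A hnonneg hdeg hα x t)

lemma ppr_sum_eq_one (A : V → V → ℝ) (hsymm : ∀ u v, A u v = A v u)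
    (hnonneg : ∀ u v, 0 ≤ A u v)
    (hdeg : ∀ u, 0 < deg A u) {α : ℝ} (hα : α ∈ Set.Ioo (0:ℝ) 1) (x : V) :
    ∑ t, ppr A α x t = 1 := by
  unfold ppr
  rw [← Summable.tsum_finsetSum (fun t _ => ppr_summable A hsymm hnonneg hdeg hα x t)]
  have : ∀ ℓ : ℕ, (∑ t, α * (1 - α) ^ ℓ * ((transP A ^ ℓ).mulVec (Pi.single x 1)) t)
      = α * (1 - α) ^ ℓ := by
    intro ℓ
    rw [← Finset.mul_sum]
    simp only [mulVec_single_eq]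
    rw [pow_colsum A hsymm hdeg ℓ x, mul_one]
  rw [tsum_congr this, tsum_mul_left,
    tsum_geometric_of_lt_one (by linarith [hα.2]) (by linarith [hα.1])]
  field_simp
  rw [sub_sub_cancel]
  exact div_self hα.1.ne'
end

/-- **ℓ1-error of EdgePush (Lemma 5.2)**: if the EdgePush invariant holds and every
edge residue satisfies `0 ≤ R(u,v) ≤ θ(u,v)`, then `α·q` approximates `π_s`
within ℓ1-error `Σ_{(u,v)} θ(u,v)`. -/
theorem edgepush_l1_error
    {V : Type*} [Fintype V] [DecidableEq V] [Nonempty V]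
    (A : V → V → ℝ)
    (hsymm : ∀ u v : V, A u v = A v u)
    (hnonneg : ∀ u v : V, 0 ≤ A u v)
    (hdeg : ∀ u : V, 0 < deg A u)
    (α : ℝ) (hα : α ∈ Set.Ioo (0 : ℝ) 1)
    (s : V)
    (q : V → ℝ) (R θ : V → V → ℝ)
    (hinv : ∀ t : V,
      ppr A α s t = α * q t + ∑ p : V × V, R p.1 p.2 * ppr A α p.2 t)
    (hRnonneg : ∀ u v : V, 0 ≤ R u v)
    (hRθ : ∀ u v : V, R u v ≤ θ u v) :
    ∑ t, |ppr A α s t - α * q t| ≤ ∑ p : V × V, θ p.1 p.2 := by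
  have habs : ∀ t : V, |ppr A α s t - α * q t|
      = ∑ p : V × V, R p.1 p.2 * ppr A α p.2 t := by
    intro t
    have h1 : ppr A α s t - α * q t = ∑ p : V × V, R p.1 p.2 * ppr A α p.2 t := by
      linarith [hinv t]
    rw [h1, abs_of_nonneg]
    exact Finset.sum_nonneg fun p _ =>
      mul_nonneg (hRnonneg p.1 p.2) (ppr_nonneg A hsymm hnonneg hdeg hα p.2 t)
  calc ∑ t, |ppr A α s t - α * q t|
      = ∑ t, ∑ p : V × V, R p.1 p.2 * ppr A α p.2 t := by
        exact Finset.sum_congr rfl fun t _ => habs t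
    _ = ∑ p : V × V, ∑ t, R p.1 p.2 * ppr A α p.2 t := Finset.sum_comm
    _ = ∑ p : V × V, R p.1 p.2 := by
        refine Finset.sum_congr rfl fun p _ => ?_
        rw [← Finset.mul_sum, ppr_sum_eq_one A hsymm hnonneg hdeg hα p.2, mul_one]
    _ ≤ ∑ p : V × V, θ p.1 p.2 := Finset.sum_le_sum fun p _ => hRθ p.1 p.2
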